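/- Let 0 ≤ k ≤ n. The unitary group of ℂⁿ acts transitively on the set Γ_k of coisotropic real subspaces of ℂⁿ of real dimension n+k: for every coisotropic real-linear subspace C ⊆ ℂⁿ with dim_ℝ C = n+k there exists a unitary (complex-linear, Hermitian-inner-product-preserving) automorphism A of ℂⁿ such that A(ℂ^k × ℝ^{n−k}) = C. -/

import Mathlib

noncomputable section

/-- The real inner product `g(u,v) = Re⟨u,v⟩` on `ℂⁿ`. -/
def gR {n : ℕ} (u v : EuclideanSpace ℂ (Fin n)) : ℝ :=
  Complex.re (inner ℂ u v : ℂ)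

/-- The standard symplectic form `ω(u,v) = g(iu,v)` on `ℂⁿ`. -/
def omegaR {n : ℕ} (u v : EuclideanSpace ℂ (Fin n)) : ℝ :=
  gR ((Complex.I : ℂ) • u) v

/-- The symplectic orthogonal `C^ω` of a set `C ⊆ ℂⁿ`. -/
def symplOrth {n : ℕ} (C : Set (EuclideanSpace ℂ (Fin n))) :
    Set (EuclideanSpace ℂ (Fin n)) :=
  {v | ∀ u ∈ C, omegaR u v = 0}

/-- The model coisotropic subspace `C₀ = ℂ^k × ℝ^{n−k} ⊆ ℂⁿ`, given by the vanishing
of the imaginary parts of the last `n − k` coordinates. -/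
def modelC (n k : ℕ) : Submodule ℝ (EuclideanSpace ℂ (Fin n)) where
  carrier := {v | ∀ i : Fin n, k ≤ (i : ℕ) → (v i).im = 0}
  add_mem' := by
    intro a b ha hb i hi
    simp only [PiLp.add_apply, Complex.add_im, ha i hi, hb i hi, add_zero]
  zero_mem' := by intro i hi; simp
  smul_mem' := by
    intro c a ha i hi
    simp only [PiLp.smul_apply, Complex.smul_im, ha i hi, smul_zero]

attribute [local instance] InnerProductSpace.complexToReal

open Module

variable {n : ℕ}

abbrev Vc (n : ℕ) := EuclideanSpace ℂ (Fin n)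

/-- The symplectic orthogonal of a real submodule, as a real submodule. -/
def SOsub (D : Submodule ℝ (Vc n)) : Submodule ℝ (Vc n) where
  carrier := {v | ∀ u ∈ D, (inner ℂ u v : ℂ).im = 0}
  add_mem' := by
    intro a b ha hb u hu
    rw [inner_add_right]
    simp only [Complex.add_im, ha u hu, hb u hu, add_zero]
  zero_mem' := by intro u hu; simp
  smul_mem' := by
    intro c a ha u hu
    rw [RCLike.real_smul_eq_coe_smul (K := ℂ) c a, inner_smul_real_right]
    simp only [Complex.real_smul, Complex.mul_im, Complex.ofReal_re, Complex.ofReal_im,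
      ha u hu, mul_zero, zero_mul, add_zero]

lemma omegaR_eq (u v : Vc n) : (inner ℂ ((Complex.I:ℂ) • u) v : ℂ).re = (inner ℂ u v : ℂ).im := by
  rw [inner_smul_left]; simp

/-- multiplication by I as a real-linear equivalence -/
def Jeq (n : ℕ) : Vc n ≃ₗ[ℝ] Vc n :=
  (LinearEquiv.smulOfNeZero ℂ (Vc n) Complex.I Complex.I_ne_zero).restrictScalars ℝ

lemma SOsub_eq_orthogonal (D : Submodule ℝ (Vc n)) :
    SOsub D = (D.map (Jeq n).toLinearMap)ᗮ := by
  ext v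
  rw [Submodule.mem_orthogonal]
  constructor
  · rintro hv u ⟨w, hw, rfl⟩
    show (inner ℝ ((Complex.I:ℂ) • w) v : ℝ) = 0
    have : (inner ℝ ((Complex.I:ℂ) • w) v : ℝ) = (inner ℂ ((Complex.I:ℂ) • w) v : ℂ).re := rfl
    rw [this, omegaR_eq]
    exact hv w hw
  · intro hv u hu
    have h := hv ((Jeq n) u) ⟨u, hu, rfl⟩
    have h' : (inner ℝ ((Complex.I:ℂ) • u) v : ℝ) = 0 := h
    have : (inner ℝ ((Complex.I:ℂ) • u) v : ℝ) = (inner ℂ ((Complex.I:ℂ) • u) v : ℂ).re := rfl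
    rw [this, omegaR_eq] at h'
    exact h'

lemma finrank_Vc (n : ℕ) : finrank ℝ (Vc n) = 2 * n := by
  have := Module.finrank_mul_finrank ℝ ℂ (Vc n)
  simp [Complex.finrank_real_complex] at this
  omega

lemma finrank_SOsub (D : Submodule ℝ (Vc n)) :
    finrank ℝ (SOsub D) + finrank ℝ D = 2 * n := by
  haveI : FiniteDimensional ℝ (Vc n) := Module.Finite.trans ℂ (Vc n)
  rw [SOsub_eq_orthogonal]
  have h1 : finrank ℝ (D.map (Jeq n).toLinearMap) = finrank ℝ D :=
    LinearEquiv.finrank_map_eq _ _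
  have h2 := Submodule.finrank_add_finrank_orthogonal (D.map (Jeq n).toLinearMap) (𝕜 := ℝ)
  rw [finrank_Vc] at h2
  omega

lemma SOsub_SOsub_eq (D : Submodule ℝ (Vc n)) : SOsub (SOsub D) = D := by
  haveI : FiniteDimensional ℝ (Vc n) := Module.Finite.trans ℂ (Vc n)
  have le1 : D ≤ SOsub (SOsub D) := by
    intro v hv u hu
    have h1 : (inner ℂ v u : ℂ).im = 0 := hu v hv
    have h2 : (inner ℂ u v : ℂ) = (starRingEnd ℂ) (inner ℂ v u : ℂ) := (inner_conj_symm u v).symm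
    rw [h2, Complex.conj_im, h1, neg_zero]
  have e1 := finrank_SOsub (SOsub D)
  have e2 := finrank_SOsub D
  exact (Submodule.eq_of_le_of_finrank_le le1 (by omega)).symm

/-- The unitary group of `ℂⁿ` acts transitively on the set of coisotropic real
subspaces of real dimension `n + k`: any such `C` is the image of the model
`C₀ = ℂ^k × ℝ^{n−k}` under a unitary automorphism of `ℂⁿ`. -/
theorem unitary_transitive_on_coisotropic (n k : ℕ) (hk : k ≤ n)
    (C : Submodule ℝ (EuclideanSpace ℂ (Fin n)))
    (hcoiso : symplOrth (C : Set (EuclideanSpace ℂ (Fin n))) ⊆ C)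
    (hdim : Module.finrank ℝ C = n + k) :
    ∃ A : EuclideanSpace ℂ (Fin n) ≃ₗᵢ[ℂ] EuclideanSpace ℂ (Fin n),
      A '' (modelC n k : Set (EuclideanSpace ℂ (Fin n)))
        = (C : Set (EuclideanSpace ℂ (Fin n))) := by
  have hco : ∀ v : Vc n, (∀ u ∈ C, (inner ℂ u v : ℂ).im = 0) → v ∈ C := by
    intro v hv
    apply hcoiso
    intro u hu
    show Complex.re (inner ℂ ((Complex.I : ℂ) • u) v : ℂ) = 0
    rw [omegaR_eq]
    exact hv u hu
  haveI : FiniteDimensional ℝ (Vc n) := Module.Finite.trans ℂ (Vc n)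
  set N := SOsub C with hN
  have hNC : N ≤ C := fun v hv => hco v hv
  have hfinN : finrank ℝ N = n - k := by
    have h2 := finrank_SOsub C
    rw [← hN, hdim] at h2
    omega
  have hCeq : C = SOsub N := by
    rw [hN]
    exact (SOsub_SOsub_eq C).symm
  -- orthonormal basis of N
  set d := n - k with hd
  let B : OrthonormalBasis (Fin d) ℝ N :=
    (stdOrthonormalBasis ℝ N).reindex (finCongr hfinN)
  let w : Fin d → Vc n := fun j => (B j : Vc n)
  have hw_mem : ∀ j, w j ∈ N := fun j => (B j).2
  have hw_orthoC : ∀ i j : Fin d,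
      (inner ℂ (w i) (w j) : ℂ) = if i = j then 1 else 0 := by
    intro i j
    have hre : (inner ℝ (w i) (w j) : ℝ) = if i = j then 1 else 0 := by
      have := B.orthonormal
      rw [orthonormal_iff_ite] at this
      have h := this i j
      rwa [Submodule.coe_inner] at h
    have him : (inner ℂ (w i) (w j) : ℂ).im = 0 :=
      hw_mem j (w i) (hNC (hw_mem i))
    apply Complex.ext
    · exact hre.trans (by split_ifs <;> simp)
    · rw [him]; split_ifs <;> simp
  -- extend to a complex orthonormal basis of V
  set s : Set (Fin n) := {i | k ≤ (i : ℕ)} with hs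
  let v : Fin n → Vc n := fun i =>
    if h : k ≤ (i : ℕ) then w ⟨(i : ℕ) - k, by omega⟩ else 0
  have hv_on : ∀ (i : Fin n) (hi : k ≤ (i : ℕ)),
      v i = w ⟨(i : ℕ) - k, by have := i.isLt; omega⟩ := by
    intro i hi; simp only [v, dif_pos hi]
  have h_orth : Orthonormal ℂ (s.restrict v) := by
    rw [orthonormal_iff_ite]
    rintro ⟨i, hi⟩ ⟨j, hj⟩
    have hi' : k ≤ (i : ℕ) := hi
    have hj' : k ≤ (j : ℕ) := hj
    show (inner ℂ (v i) (v j) : ℂ) = _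
    rw [hv_on i hi', hv_on j hj', hw_orthoC]
    have key : (⟨(i:ℕ) - k, by have := i.isLt; omega⟩ : Fin d)
        = ⟨(j:ℕ) - k, by have := j.isLt; omega⟩ ↔ i = j := by
      constructor
      · intro h
        have h' : (i:ℕ) - k = (j:ℕ) - k := congrArg Fin.val h
        exact Fin.ext (by omega)
      · intro h; subst h; rfl
    split_ifs with h1 h2 h2
    · rfl
    · exact absurd (Subtype.ext (key.mp h1)) h2
    · exact absurd (key.mpr (congrArg Subtype.val h2)) h1
    · rfl
  have hcard : finrank ℂ (Vc n) = Fintype.card (Fin n) := by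
    simp [finrank_euclideanSpace_fin]
  obtain ⟨b, hb⟩ := h_orth.exists_orthonormalBasis_extension_of_card_eq hcard
  -- characterization of membership in C
  have hchar : ∀ x : Vc n,
      x ∈ C ↔ ∀ i : Fin n, k ≤ (i : ℕ) → (inner ℂ (b i) x : ℂ).im = 0 := by
    intro x
    rw [hCeq]
    constructor
    · intro hx i hi
      have hbiN : b i ∈ N := by
        rw [hb i hi, hv_on i hi]; exact hw_mem _
      exact hx (b i) hbiN
    · intro h u hu
      -- the real-linear functional u ↦ im ⟪u, x⟫
      let φ : Vc n →ₗ[ℝ] ℝ :=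
        { toFun := fun u => (inner ℂ u x : ℂ).im
          map_add' := by
            intro a b'
            show (inner ℂ (a + b') x : ℂ).im = (inner ℂ a x : ℂ).im + (inner ℂ b' x : ℂ).im
            rw [inner_add_left]
            simp
          map_smul' := by
            intro c a
            show (inner ℂ (c • a) x : ℂ).im = c * (inner ℂ a x : ℂ).im
            rw [RCLike.real_smul_eq_coe_smul (K := ℂ) c a, inner_smul_left]
            simp }
      have hφw : ∀ j : Fin d, φ (w j) = 0 := by
        intro j
        have hkj : (⟨k + (j : ℕ), by omega⟩ : Fin n) ∈ s := by
          simp [hs]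
        have h1 := hb _ hkj
        have h2 := hv_on ⟨k + (j : ℕ), by omega⟩ (by simp)
        have h3 : (⟨k + (j : ℕ) - k, by have := j.isLt; omega⟩ : Fin d) = j :=
          Fin.ext (show k + (j : ℕ) - k = (j : ℕ) by omega)
        have hbj : b ⟨k + (j : ℕ), by omega⟩ = w j := by rw [h1, h2, h3]
        have := h ⟨k + (j : ℕ), by omega⟩ (by simp)
        rw [hbj] at this
        exact this
      have hrep := B.sum_repr ⟨u, hu⟩
      have hu_eq : u = ∑ j : Fin d, (B.repr ⟨u, hu⟩ j) • w j := by
        have := congrArg (N.subtype) hrep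
        simp only [map_sum, map_smul, Submodule.coe_subtype] at this
        exact this.symm
      show φ u = 0
      rw [hu_eq, map_sum]
      simp only [map_smul, hφw, smul_eq_mul, mul_zero, Finset.sum_const_zero]
  -- conclude: A := b.repr.symm works
  refine ⟨b.repr.symm, ?_⟩
  ext x
  simp only [Set.mem_image, SetLike.mem_coe]
  constructor
  · rintro ⟨y, hy, rfl⟩
    rw [hchar]
    intro i hi
    have hy' : (y i).im = 0 := hy i hi
    have h1 : (inner ℂ (b i) (b.repr.symm y) : ℂ) = b.repr (b.repr.symm y) i :=
      (b.repr_apply_apply (b.repr.symm y) i).symm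
    rw [h1, b.repr.apply_symm_apply, hy']
  · intro hx
    refine ⟨b.repr x, ?_, b.repr.symm_apply_apply x⟩
    intro i hi
    rw [b.repr_apply_apply x i]
    exact (hchar x).mp hx i hi

end
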